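/- Let $k \ge 1$, $p = 2k$, and let $q$ be the conjugate exponent, $\frac{1}{p} + \frac{1}{q} = 1$. Suppose $1 > \overline{\mu}_1 > \overline{\mu}_2 > \cdots > \overline{\mu}_k > 0$, and for each $j \in \mathbb{N}$ let $g_{j,1}, \dots, g_{j,k}$ be independent symmetric random variables on $[0,1]$ taking only the values $-1, 0, 1$ with $\int |g_{j,i}| = \overline{\mu}_i$, and set $h_j = \sum_{i=1}^k g_{j,i}$. Then, with $C_k = \sum_{\alpha=1}^{k} \binom{k}{\alpha} C_{k,\alpha}$, one has $\|h_j\|_p \cdot \|h_j\|_q \le C_k^{1/p}\, \|h_j\|_2^2$ for all $j \in \mathbb{N}$; in particular there is a constant $C = C(p)$, independent of $j$, with $\|h_j\|_p \cdot \|h_j\|_q \le C\, \|h_j\|_2^2$ for all $j$. -/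

import Mathlib

open MeasureTheory ProbabilityTheory Finset
open scoped ENNReal NNReal

/-- The probability space `[0,1]` with Lebesgue measure. -/
noncomputable def mu01 : MeasureTheory.Measure ℝ :=
  MeasureTheory.volume.restrict (Set.Icc (0 : ℝ) 1)

/-- `Ccoef m α = C_{m,α} = ∑_{n₁+⋯+n_α = m, nᵢ ≥ 1} (2m)! / ((2n₁)! ⋯ (2n_α)!)`. -/
def Ccoef (m α : ℕ) : ℕ :=
  ∑ c ∈ (Finset.Nat.antidiagonalTuple α m).filter (fun c => ∀ i, 1 ≤ c i),
    Nat.multinomial Finset.univ (fun i => 2 * c i)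

@[to_additive]
lemma prod_orderEmbOfFin' {M : Type*} [CommMonoid M] {n : ℕ} (S : Finset (Fin n)) (f : Fin n → M) :
    ∏ j : Fin S.card, f (S.orderEmbOfFin rfl j) = ∏ i ∈ S, f i := by
  rw [← Finset.prod_image (f := f) (g := S.orderEmbOfFin rfl)
    (fun a _ b _ h => (S.orderEmbOfFin rfl).injective h)]
  congr 1
  ext x
  simp only [Finset.mem_image, Finset.mem_univ, true_and]
  constructor
  · rintro ⟨j, rfl⟩; exact Finset.orderEmbOfFin_mem S rfl j
  · intro hx
    have hr := Finset.range_orderEmbOfFin S rfl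
    have : x ∈ Set.range (S.orderEmbOfFin rfl) := by rw [hr]; exact hx
    exact this

lemma multinomial_subset {α : Type*} [DecidableEq α] (S T : Finset α) (hST : S ⊆ T) (f : α → ℕ)
    (hf : ∀ a ∈ T, a ∉ S → f a = 0) :
    Nat.multinomial T f = Nat.multinomial S f := by
  unfold Nat.multinomial
  rw [← Finset.sum_subset hST hf, ← Finset.prod_subset hST (by
    intro a ha h; rw [hf a ha h]; rfl)]

lemma fiber_eq (k : ℕ) (S : Finset (Fin k)) :
    ∑ e ∈ (Finset.piAntidiag (univ : Finset (Fin k)) k).filter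
        (fun e => univ.filter (fun i => e i ≠ 0) = S),
      Nat.multinomial univ (fun i => 2 * e i) = Ccoef k S.card := by
  classical
  rw [Ccoef]
  refine Finset.sum_nbij' (fun e => fun j => e (S.orderEmbOfFin rfl j))
    (fun c => fun i => if h : i ∈ S then c ((S.orderIsoOfFin rfl).symm ⟨i, h⟩) else 0)
    ?_ ?_ ?_ ?_ ?_
  · -- forward membership
    intro e he
    rw [Finset.mem_filter] at he
    obtain ⟨he1, he2⟩ := he
    rw [Finset.mem_piAntidiag] at he1
    rw [Finset.mem_filter]
    constructor
    · rw [Finset.Nat.mem_antidiagonalTuple]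
      rw [sum_orderEmbOfFin']
      have hs : ∑ i ∈ S, e i = ∑ i ∈ univ, e i := by
        refine Finset.sum_subset (Finset.subset_univ S) ?_
        intro i _ hi
        by_contra h
        exact hi ((Finset.ext_iff.1 he2 i).1 (Finset.mem_filter.2 ⟨Finset.mem_univ i, h⟩))
      rw [hs]
      exact he1.1
    · intro j
      dsimp only
      have hmem : S.orderEmbOfFin rfl j ∈ S := Finset.orderEmbOfFin_mem S rfl j
      have := Finset.mem_filter.1 ((Finset.ext_iff.1 he2 _).2 hmem)
      omega
  · -- backward membership
    intro c hc
    rw [Finset.mem_filter] at hc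
    obtain ⟨hc1, hc2⟩ := hc
    rw [Finset.Nat.mem_antidiagonalTuple] at hc1
    have hsupp : (univ.filter fun i =>
        (if h : i ∈ S then c ((S.orderIsoOfFin rfl).symm ⟨i, h⟩) else 0) ≠ 0) = S := by
      ext i
      simp only [Finset.mem_filter, Finset.mem_univ, true_and]
      constructor
      · intro hi
        by_contra h
        simp [h] at hi
      · intro hi
        have := hc2 ((S.orderIsoOfFin rfl).symm ⟨i, hi⟩)
        simp only [dif_pos hi]
        omega
    rw [Finset.mem_filter]
    refine ⟨?_, hsupp⟩
    rw [Finset.mem_piAntidiag]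
    refine ⟨?_, fun i _ => Finset.mem_univ i⟩
    rw [← Finset.sum_subset (Finset.filter_subset
        (fun i => (if h : i ∈ S then c ((S.orderIsoOfFin rfl).symm ⟨i, h⟩) else 0) ≠ 0) univ) (by
      intro i _ hi
      simp only [Finset.mem_filter, Finset.mem_univ, true_and, not_not] at hi
      exact hi)]
    rw [hsupp, ← sum_orderEmbOfFin' S
      (fun i => if h : i ∈ S then c ((S.orderIsoOfFin rfl).symm ⟨i, h⟩) else 0)]
    refine Eq.trans (Finset.sum_congr rfl fun j _ => ?_) hc1
    have hmem : S.orderEmbOfFin rfl j ∈ S := Finset.orderEmbOfFin_mem S rfl j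
    rw [dif_pos hmem]
    congr 1
    have : (⟨S.orderEmbOfFin rfl j, hmem⟩ : {x // x ∈ S}) = S.orderIsoOfFin rfl j :=
      Subtype.ext (Finset.coe_orderIsoOfFin_apply S rfl j).symm
    rw [this, OrderIso.symm_apply_apply]
  · -- left inverse
    intro e he
    rw [Finset.mem_filter] at he
    obtain ⟨_, he2⟩ := he
    funext i
    dsimp only
    by_cases hi : i ∈ S
    · rw [dif_pos hi]
      congr 1
      have : S.orderEmbOfFin rfl ((S.orderIsoOfFin rfl).symm ⟨i, hi⟩) =
          ((S.orderIsoOfFin rfl) ((S.orderIsoOfFin rfl).symm ⟨i, hi⟩) : Fin k) :=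
        (Finset.coe_orderIsoOfFin_apply S rfl _)
      rw [this, OrderIso.apply_symm_apply]
    · rw [dif_neg hi]
      rw [← he2, Finset.mem_filter] at hi
      push_neg at hi
      exact (hi (Finset.mem_univ i)).symm
  · -- right inverse
    intro c hc
    funext j
    dsimp only
    have hmem : S.orderEmbOfFin rfl j ∈ S := Finset.orderEmbOfFin_mem S rfl j
    rw [dif_pos hmem]
    congr 1
    have : (⟨S.orderEmbOfFin rfl j, hmem⟩ : {x // x ∈ S}) = S.orderIsoOfFin rfl j :=
      Subtype.ext (Finset.coe_orderIsoOfFin_apply S rfl j).symm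
    rw [this, OrderIso.symm_apply_apply]
  · -- value
    intro e he
    rw [Finset.mem_filter] at he
    obtain ⟨_, he2⟩ := he
    rw [multinomial_subset S univ (Finset.subset_univ S) _ (by
      intro a _ ha
      rw [← he2, Finset.mem_filter] at ha
      push_neg at ha
      simp [ha (Finset.mem_univ a)])]
    unfold Nat.multinomial
    dsimp only
    rw [← sum_orderEmbOfFin' S (fun i => 2 * e i),
      ← prod_orderEmbOfFin' S (fun i => (2 * e i).factorial)]

lemma Ccoef_zero (k : ℕ) (hk : 1 ≤ k) : Ccoef k 0 = 0 := by
  rw [Ccoef]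
  have : ((Finset.Nat.antidiagonalTuple 0 k).filter (fun c => ∀ i, 1 ≤ c i)) = ∅ := by
    refine Finset.eq_empty_of_forall_notMem fun c hc => ?_
    rw [Finset.mem_filter, Finset.Nat.mem_antidiagonalTuple] at hc
    have := hc.1
    simp at this
    omega
  rw [this, Finset.sum_empty]

lemma count_lemma (k : ℕ) (hk : 1 ≤ k) :
    ∑ e ∈ Finset.piAntidiag (Finset.univ : Finset (Fin k)) k,
      Nat.multinomial Finset.univ (fun i => 2 * e i)
    = ∑ α ∈ Finset.Icc 1 k, k.choose α * Ccoef k α := by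
  classical
  have hins : Finset.range (k + 1) = insert 0 (Finset.Icc 1 k) := by
    ext m
    simp only [Finset.mem_range, Finset.mem_insert, Finset.mem_Icc]
    omega
  have step1 : (∑ e ∈ Finset.piAntidiag (Finset.univ : Finset (Fin k)) k,
      Nat.multinomial Finset.univ (fun i => 2 * e i))
      = ∑ S ∈ (univ : Finset (Fin k)).powerset,
          ∑ e ∈ (Finset.piAntidiag (univ : Finset (Fin k)) k).filter
            (fun e => univ.filter (fun i => e i ≠ 0) = S),
          Nat.multinomial univ (fun i => 2 * e i) :=
    (Finset.sum_fiberwise_of_maps_to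
      (fun e _ => Finset.mem_powerset.2 (Finset.filter_subset _ _)) _).symm
  rw [step1]
  rw [Finset.sum_congr rfl (fun S _ => fiber_eq k S)]
  rw [Finset.sum_powerset_apply_card (fun m => Ccoef k m)]
  simp only [Finset.card_univ, Fintype.card_fin]
  rw [hins, Finset.sum_insert (by simp)]
  rw [Ccoef_zero k hk]
  simp only [smul_eq_mul, Nat.mul_zero, Nat.zero_add]

lemma even_reindex (k : ℕ) :
    ∑ d ∈ (Finset.piAntidiag (univ : Finset (Fin k)) (2 * k)).filter
        (fun d => ∀ i, Even (d i)), Nat.multinomial univ d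
    = ∑ e ∈ Finset.piAntidiag (univ : Finset (Fin k)) k,
        Nat.multinomial univ (fun i => 2 * e i) := by
  classical
  refine Finset.sum_nbij' (fun d => fun i => d i / 2) (fun e => fun i => 2 * e i) ?_ ?_ ?_ ?_ ?_
  · intro d hd
    rw [Finset.mem_filter, Finset.mem_piAntidiag] at hd
    obtain ⟨⟨hd1, _⟩, hd2⟩ := hd
    rw [Finset.mem_piAntidiag]
    refine ⟨?_, fun i _ => Finset.mem_univ i⟩
    have : ∑ i, d i = ∑ i, 2 * (d i / 2) :=
      Finset.sum_congr rfl fun i _ => by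
        obtain ⟨m, hm⟩ := hd2 i; omega
    rw [this, ← Finset.mul_sum] at hd1
    exact Nat.eq_of_mul_eq_mul_left two_pos hd1
  · intro e he
    rw [Finset.mem_piAntidiag] at he
    rw [Finset.mem_filter, Finset.mem_piAntidiag]
    exact ⟨⟨by rw [← Finset.mul_sum, he.1], fun i _ => Finset.mem_univ i⟩,
      fun i => ⟨e i, by dsimp; omega⟩⟩
  · intro d hd
    rw [Finset.mem_filter] at hd
    funext i
    obtain ⟨m, hm⟩ := hd.2 i
    dsimp; omega
  · intro e _
    funext i
    dsimp; omega
  · intro d hd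
    rw [Finset.mem_filter] at hd
    refine Nat.multinomial_congr fun i _ => ?_
    obtain ⟨m, hm⟩ := hd.2 i
    dsimp; omega

instance : IsProbabilityMeasure mu01 := ⟨by
  rw [mu01, Measure.restrict_apply_univ, Real.volume_Icc]
  norm_num⟩

lemma integrable_of_bound (φ : ℝ → ℝ) (C : ℝ) (hm : Measurable φ)
    (hb : ∀ x, |φ x| ≤ C) : Integrable φ mu01 :=
  (memLp_top_of_bound hm.aestronglyMeasurable C (Filter.Eventually.of_forall fun x => by
      simpa using hb x)).integrable le_top

lemma val_cases {G : ℝ → ℝ} (hval : ∀ x, G x ∈ ({-1, 0, 1} : Set ℝ)) (x : ℝ) :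
    G x = -1 ∨ G x = 0 ∨ G x = 1 := by
  have := hval x
  simpa [Set.mem_insert_iff] using this

lemma abs_le_one_of_val {G : ℝ → ℝ} (hval : ∀ x, G x ∈ ({-1, 0, 1} : Set ℝ)) (x : ℝ) :
    |G x| ≤ 1 := by
  rcases val_cases hval x with h | h | h <;> simp [h]

lemma integral_odd_pow_eq_zero (G : ℝ → ℝ) (hm : Measurable G)
    (hsym : mu01.map G = mu01.map (fun x => - G x)) (d : ℕ) (hd : Odd d) :
    ∫ x, G x ^ d ∂mu01 = 0 := by
  have h1 : ∫ x, G x ^ d ∂mu01 = ∫ y, y ^ d ∂(mu01.map G) :=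
    (integral_map hm.aemeasurable (measurable_id.pow_const d).aestronglyMeasurable).symm
  have h2 : ∫ y, y ^ d ∂(mu01.map (fun x => - G x)) = ∫ x, (- G x) ^ d ∂mu01 :=
    integral_map hm.neg.aemeasurable (measurable_id.pow_const d).aestronglyMeasurable
  have h3 : ∫ x, (- G x) ^ d ∂mu01 = - ∫ x, G x ^ d ∂mu01 := by
    rw [← integral_neg]
    exact integral_congr_ae (Filter.Eventually.of_forall fun x => hd.neg_pow _)
  have h5 : ∫ y, y ^ d ∂(mu01.map G) = ∫ y, y ^ d ∂(mu01.map fun x => - G x) := by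
    rw [hsym]
  linarith [h1, h2, h3, h5]

lemma integral_even_pow {G : ℝ → ℝ} (hval : ∀ x, G x ∈ ({-1, 0, 1} : Set ℝ))
    (d : ℕ) (hd : Even d) (hd0 : d ≠ 0) :
    ∫ x, G x ^ d ∂mu01 = ∫ x, |G x| ∂mu01 := by
  refine integral_congr_ae (Filter.Eventually.of_forall fun x => ?_)
  show G x ^ d = |G x|
  rcases val_cases hval x with h | h | h <;> rw [h]
  · rw [hd.neg_one_pow]; norm_num
  · rw [zero_pow hd0]; norm_num
  · norm_num

lemma integral_prod_indep {k : ℕ} (f : Fin k → ℝ → ℝ)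
    (hind : iIndepFun f mu01)
    (hm : ∀ i, Measurable (f i)) (hb : ∀ i x, |f i x| ≤ 1)
    (s : Finset (Fin k)) :
    ∫ x, ∏ i ∈ s, f i x ∂mu01 = ∏ i ∈ s, ∫ x, f i x ∂mu01 := by
  classical
  induction s using Finset.cons_induction with
  | empty => simp
  | cons a s ha ih =>
    have hprod_meas : Measurable (fun x => ∏ i ∈ s, f i x) :=
      Finset.measurable_prod s fun i _ => hm i
    have hprod_b : ∀ x, |∏ i ∈ s, f i x| ≤ 1 := fun x => by
      rw [Finset.abs_prod]
      exact Finset.prod_le_one (fun i _ => abs_nonneg _) (fun i _ => hb i x)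
    have hid : IndepFun (fun x => ∏ i ∈ s, f i x) (f a) mu01 := by
      have h0 := hind.indepFun_finsetProd_of_notMem hm ha
      have hfe : (∏ j ∈ s, f j) = fun x => ∏ i ∈ s, f i x :=
        funext fun x => Finset.prod_apply x s f
      rwa [hfe] at h0
    simp only [Finset.prod_cons]
    have hcomm : ∫ x, f a x * ∏ i ∈ s, f i x ∂mu01
        = ∫ x, ((fun x => ∏ i ∈ s, f i x) * f a) x ∂mu01 := by
      refine integral_congr_ae (Filter.Eventually.of_forall fun x => ?_)
      simp [mul_comm]
    rw [hcomm, hid.integral_mul_eq_mul_integral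
      (integrable_of_bound _ 1 hprod_meas hprod_b).aestronglyMeasurable
      (integrable_of_bound _ 1 (hm a) (fun x => hb a x)).aestronglyMeasurable, ih]
    ring

lemma integrable_G {G : ℝ → ℝ} (hm : Measurable G)
    (hval : ∀ x, G x ∈ ({-1, 0, 1} : Set ℝ)) : Integrable G mu01 :=
  integrable_of_bound _ 1 hm (abs_le_one_of_val hval)

lemma integral_eq_zero_of_symm {G : ℝ → ℝ} (hm : Measurable G)
    (hsym : mu01.map G = mu01.map (fun x => - G x)) :
    ∫ x, G x ∂mu01 = 0 := by
  have := integral_odd_pow_eq_zero G hm hsym 1 odd_one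
  simpa using this

lemma second_moment {k : ℕ} (μbar : Fin k → ℝ) (G : Fin k → ℝ → ℝ)
    (hm : ∀ i, Measurable (G i))
    (hval : ∀ i x, G i x ∈ ({-1, 0, 1} : Set ℝ))
    (hind : iIndepFun G mu01)
    (hsym : ∀ i, mu01.map (G i) = mu01.map (fun x => - G i x))
    (habs : ∀ i, ∫ x, |G i x| ∂mu01 = μbar i) :
    ∫ x, (∑ i, G i x) ^ 2 ∂mu01 = ∑ i, μbar i := by
  classical
  have hint : ∀ i j : Fin k, Integrable (fun x => G i x * G j x) mu01 := fun i j =>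
    integrable_of_bound _ 1 ((hm i).mul (hm j)) (fun x => by
      rw [abs_mul]
      calc |G i x| * |G j x| ≤ 1 * 1 :=
            mul_le_mul (abs_le_one_of_val (hval i) x) (abs_le_one_of_val (hval j) x)
              (abs_nonneg _) zero_le_one
        _ = 1 := mul_one 1)
  have expand : (fun x => (∑ i, G i x) ^ 2)
      = fun x => ∑ i, ∑ j, G i x * G j x := by
    funext x
    rw [sq, Finset.sum_mul_sum]
  rw [expand]
  rw [integral_finset_sum univ (fun i _ => integrable_finset_sum _ (fun j _ => hint i j))]
  refine Finset.sum_congr rfl fun i _ => ?_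
  rw [integral_finset_sum univ (fun j _ => hint i j)]
  rw [Finset.sum_eq_single i (fun j _ hne => ?_) (fun h => absurd (Finset.mem_univ i) h)]
  · have : (fun x => G i x * G i x) = fun x => G i x ^ 2 := by
      funext x; ring
    rw [this, integral_even_pow (hval i) 2 (⟨1, by ring⟩ : Even 2) two_ne_zero]
    exact habs i
  · have hij : IndepFun (G i) (G j) mu01 := hind.indepFun (fun h => hne h.symm)
    have h0 := hij.integral_mul_eq_mul_integral (integrable_G (hm i) (hval i)).aestronglyMeasurable
      (integrable_G (hm j) (hval j)).aestronglyMeasurable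
    have h1 : ∫ x, G i x * G j x ∂mu01 = integral mu01 (G i * G j) := rfl
    rw [h1, h0, integral_eq_zero_of_symm (hm j) (hsym j), mul_zero]

lemma moment_bound {k : ℕ} (hk : 1 ≤ k) (μbar : Fin k → ℝ)
    (hub : ∀ i, μbar i ≤ 1) (hnn : ∀ i, 0 ≤ μbar i)
    (G : Fin k → ℝ → ℝ)
    (hm : ∀ i, Measurable (G i))
    (hval : ∀ i x, G i x ∈ ({-1, 0, 1} : Set ℝ))
    (hind : iIndepFun G mu01)
    (hsym : ∀ i, mu01.map (G i) = mu01.map (fun x => - G i x))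
    (habs : ∀ i, ∫ x, |G i x| ∂mu01 = μbar i) :
    ∫ x, (∑ i, G i x) ^ (2 * k) ∂mu01
      ≤ (∑ α ∈ Finset.Icc 1 k, (k.choose α : ℝ) * (Ccoef k α : ℝ)) * ∑ i, μbar i := by
  classical
  -- pointwise expansion
  have expand : (fun x => (∑ i, G i x) ^ (2 * k))
      = fun x => ∑ d ∈ Finset.piAntidiag (univ : Finset (Fin k)) (2 * k),
          (Nat.multinomial univ d : ℝ) * ∏ i, G i x ^ d i := by
    funext x
    exact Finset.sum_pow_eq_sum_piAntidiag univ (fun i => G i x) (2 * k)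
  -- boundedness of products
  have hprod_meas : ∀ d : Fin k → ℕ, Measurable (fun x => ∏ i, G i x ^ d i) :=
    fun d => Finset.measurable_prod univ fun i _ => (hm i).pow_const (d i)
  have hprod_b : ∀ (d : Fin k → ℕ) x, |∏ i, G i x ^ d i| ≤ 1 := fun d x => by
    rw [Finset.abs_prod]
    refine Finset.prod_le_one (fun i _ => abs_nonneg _) (fun i _ => ?_)
    rw [abs_pow]
    exact pow_le_one₀ (abs_nonneg _) (abs_le_one_of_val (hval i) x)
  have hterm_int : ∀ d : Fin k → ℕ,
      Integrable (fun x => (Nat.multinomial univ d : ℝ) * ∏ i, G i x ^ d i) mu01 :=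
    fun d => (integrable_of_bound _ 1 (hprod_meas d) (hprod_b d)).const_mul _
  rw [expand, integral_finset_sum _ (fun d _ => hterm_int d)]
  -- factor each term
  have hfac : ∀ (i : Fin k) (d : ℕ), ∫ x, G i x ^ d ∂mu01
      = if d = 0 then 1 else if Even d then μbar i else 0 := by
    intro i d
    rcases Nat.eq_zero_or_pos d with h0 | hpos
    · subst h0; simp
    · rw [if_neg hpos.ne']
      by_cases hev : Even d
      · rw [if_pos hev, integral_even_pow (hval i) d hev hpos.ne']
        exact habs i
      · rw [if_neg hev, integral_odd_pow_eq_zero (G i) (hm i) (hsym i) d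
          (Nat.not_even_iff_odd.mp hev)]
  have hfactor : ∀ d : Fin k → ℕ,
      ∫ x, ∏ i, G i x ^ d i ∂mu01 = ∏ i, ∫ x, G i x ^ d i ∂mu01 := by
    intro d
    have hcomp : iIndepFun (fun i => fun x => G i x ^ d i) mu01 := by
      have := hind.comp (fun i => fun y : ℝ => y ^ d i)
        (fun i => measurable_id.pow_const (d i))
      exact this
    exact integral_prod_indep _ hcomp (fun i => (hm i).pow_const (d i))
      (fun i x => by
        rw [abs_pow]
        exact pow_le_one₀ (abs_nonneg _) (abs_le_one_of_val (hval i) x)) univ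
  -- bound each term
  have hterm_bound : ∀ d ∈ Finset.piAntidiag (univ : Finset (Fin k)) (2 * k),
      (Nat.multinomial univ d : ℝ) * ∏ i, ∫ x, G i x ^ d i ∂mu01
        ≤ (Nat.multinomial univ d : ℝ)
            * (if ∀ i, Even (d i) then ∑ i, μbar i else 0) := by
    intro d hd
    rw [Finset.mem_piAntidiag] at hd
    refine mul_le_mul_of_nonneg_left ?_ (Nat.cast_nonneg _)
    by_cases hev : ∀ i, Even (d i)
    · rw [if_pos hev]
      have heq : ∏ i, ∫ x, G i x ^ d i ∂mu01
          = ∏ i ∈ univ.filter (fun i => d i ≠ 0), μbar i := by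
        rw [← Finset.prod_filter_mul_prod_filter_not univ (fun i => d i ≠ 0)
          (fun i => ∫ x, G i x ^ d i ∂mu01)]
        have h1 : ∏ i ∈ univ.filter (fun i => d i ≠ 0), ∫ x, G i x ^ d i ∂mu01
            = ∏ i ∈ univ.filter (fun i => d i ≠ 0), μbar i :=
          Finset.prod_congr rfl fun i hi => by
            rw [Finset.mem_filter] at hi
            rw [hfac i (d i), if_neg hi.2, if_pos (hev i)]
        have h2 : ∏ i ∈ univ.filter (fun i => ¬ d i ≠ 0), ∫ x, G i x ^ d i ∂mu01 = 1 :=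
          Finset.prod_eq_one fun i hi => by
            rw [Finset.mem_filter, not_not] at hi
            rw [hfac i (d i), if_pos hi.2]
        rw [h1, h2, mul_one]
      rw [heq]
      -- support is nonempty
      have hne : ∃ i₀, i₀ ∈ univ.filter (fun i => d i ≠ 0) := by
        by_contra h
        push_neg at h
        have : ∀ i ∈ (univ : Finset (Fin k)), d i = 0 := fun i _ => by
          by_contra h'
          exact h i (Finset.mem_filter.2 ⟨Finset.mem_univ i, h'⟩)
        have h0 := Finset.sum_eq_zero this
        rw [hd.1] at h0
        omega
      obtain ⟨i₀, hi₀⟩ := hne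
      calc ∏ i ∈ univ.filter (fun i => d i ≠ 0), μbar i
          = μbar i₀ * ∏ i ∈ (univ.filter (fun i => d i ≠ 0)).erase i₀, μbar i :=
            (Finset.mul_prod_erase _ μbar hi₀).symm
        _ ≤ μbar i₀ * 1 := mul_le_mul_of_nonneg_left
            (Finset.prod_le_one (fun i _ => hnn i) (fun i _ => hub i)) (hnn i₀)
        _ = μbar i₀ := mul_one _
        _ ≤ ∑ i, μbar i := Finset.single_le_sum (fun i _ => hnn i) (Finset.mem_univ i₀)
    · rw [if_neg hev]
      push_neg at hev
      obtain ⟨i₀, hi₀⟩ := hev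
      have hz : ∫ x, G i₀ x ^ d i₀ ∂mu01 = 0 := by
        rw [hfac i₀ (d i₀), if_neg, if_neg hi₀]
        intro h0
        exact hi₀ (h0 ▸ Even.zero)
      rw [Finset.prod_eq_zero (Finset.mem_univ i₀) hz]
  -- assemble
  calc ∑ d ∈ Finset.piAntidiag (univ : Finset (Fin k)) (2 * k),
        ∫ x, (Nat.multinomial univ d : ℝ) * ∏ i, G i x ^ d i ∂mu01
      = ∑ d ∈ Finset.piAntidiag (univ : Finset (Fin k)) (2 * k),
          (Nat.multinomial univ d : ℝ) * ∏ i, ∫ x, G i x ^ d i ∂mu01 := by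
        refine Finset.sum_congr rfl fun d _ => ?_
        rw [MeasureTheory.integral_const_mul, hfactor d]
    _ ≤ ∑ d ∈ Finset.piAntidiag (univ : Finset (Fin k)) (2 * k),
          (Nat.multinomial univ d : ℝ)
            * (if ∀ i, Even (d i) then ∑ i, μbar i else 0) :=
        Finset.sum_le_sum hterm_bound
    _ = (∑ d ∈ (Finset.piAntidiag (univ : Finset (Fin k)) (2 * k)).filter
          (fun d => ∀ i, Even (d i)), (Nat.multinomial univ d : ℝ)) * ∑ i, μbar i := by
        rw [Finset.sum_mul, Finset.sum_filter]
        refine Finset.sum_congr rfl fun d _ => ?_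
        by_cases hev : ∀ i, Even (d i) <;> simp [hev]
    _ = (∑ α ∈ Finset.Icc 1 k, (k.choose α : ℝ) * (Ccoef k α : ℝ)) * ∑ i, μbar i := by
        congr 1
        rw [← Nat.cast_sum]
        rw [even_reindex k, count_lemma k hk]
        push_cast
        rfl


/-- **Lemma `vpl`.** For `p = 2k` even with conjugate exponent `q`, if
`h_j = ∑_{i=1}^k g_{j,i}` where the `g_{j,i}` are independent symmetric `{-1,0,1}`-valued
random variables with `∫ |g_{j,i}| = μ̄ᵢ` and `1 > μ̄₁ > ⋯ > μ̄_k > 0`, then with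
`C_k = ∑_{α=1}^k (k choose α) C_{k,α}` one has
`‖h_j‖_p ⬝ ‖h_j‖_q ≤ C_k^{1/p} ‖h_j‖_2²` for all `j`; in particular there is a constant
`C = C(p)` independent of `j` with `‖h_j‖_p ⬝ ‖h_j‖_q ≤ C ‖h_j‖_2²` for all `j`. -/
theorem norm_p_mul_norm_q_le (k : ℕ) (hk : 1 ≤ k) (p q : ℝ) (hp : p = 2 * k)
    (hpq : 1 / p + 1 / q = 1)
    (μbar : Fin k → ℝ)
    (hdec : ∀ i i' : Fin k, i < i' → μbar i' < μbar i)
    (hlt1 : ∀ i, μbar i < 1) (hpos : ∀ i, 0 < μbar i)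
    (g : ℕ → Fin k → ℝ → ℝ)
    (hmeas : ∀ j i, Measurable (g j i))
    (hval : ∀ j i x, g j i x ∈ ({-1, 0, 1} : Set ℝ))
    (hindep : ∀ j, iIndepFun (g j) mu01)
    (hsymm : ∀ j i, mu01.map (g j i) = mu01.map (fun x => - g j i x))
    (habs : ∀ j i, ∫ x, |g j i x| ∂mu01 = μbar i) :
    (∀ j : ℕ,
      (∫ x, |∑ i, g j i x| ^ p ∂mu01) ^ (1 / p) * (∫ x, |∑ i, g j i x| ^ q ∂mu01) ^ (1 / q)
        ≤ (∑ α ∈ Finset.Icc 1 k, (k.choose α : ℝ) * (Ccoef k α : ℝ)) ^ (1 / p)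
            * (∫ x, |∑ i, g j i x| ^ (2 : ℝ) ∂mu01)) ∧
    ∃ C : ℝ, ∀ j : ℕ,
      (∫ x, |∑ i, g j i x| ^ p ∂mu01) ^ (1 / p) * (∫ x, |∑ i, g j i x| ^ q ∂mu01) ^ (1 / q)
        ≤ C * (∫ x, |∑ i, g j i x| ^ (2 : ℝ) ∂mu01) := by
  classical
  -- exponent facts
  have hk1 : (1 : ℝ) ≤ (k : ℝ) := by exact_mod_cast hk
  have hp2 : (2 : ℝ) ≤ p := by rw [hp]; linarith
  have hp0 : 0 < p := by linarith
  have hip : 0 < 1 / p := by positivity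
  have hip2 : 1 / p ≤ 1 / 2 := by
    rw [div_le_div_iff₀ hp0 two_pos]; linarith
  have hiq : 1 / q = 1 - 1 / p := by linarith
  have hiq0 : 0 < 1 / q := by rw [hiq]; linarith
  have hq0 : 0 < q := by
    by_contra h
    push_neg at h
    have : 1 / q ≤ 0 := div_nonpos_of_nonneg_of_nonpos zero_le_one h
    linarith
  have hq2 : q ≤ 2 := by
    have h1 : 1 / 2 ≤ 1 / q := by rw [hiq]; linarith
    have h2 : q * (1 / q) = 1 := mul_one_div_cancel hq0.ne'
    nlinarith
  set Ck : ℝ := ∑ α ∈ Finset.Icc 1 k, (k.choose α : ℝ) * (Ccoef k α : ℝ) with hCk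
  have hCk0 : 0 ≤ Ck := by positivity
  have key : ∀ j : ℕ,
      (∫ x, |∑ i, g j i x| ^ p ∂mu01) ^ (1 / p) * (∫ x, |∑ i, g j i x| ^ q ∂mu01) ^ (1 / q)
        ≤ Ck ^ (1 / p) * (∫ x, |∑ i, g j i x| ^ (2 : ℝ) ∂mu01) := by
    intro j
    set G : Fin k → ℝ → ℝ := g j with hG
    set h : ℝ → ℝ := fun x => ∑ i, G i x with hh
    have hhm : Measurable h := Finset.measurable_sum univ fun i _ => hmeas j i
    have hhb : ∀ x, |h x| ≤ (k : ℝ) := fun x => by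
      calc |h x| ≤ ∑ i, |G i x| := Finset.abs_sum_le_sum_abs _ _
        _ ≤ ∑ _i : Fin k, (1 : ℝ) :=
            Finset.sum_le_sum fun i _ => abs_le_one_of_val (hval j i) x
        _ = (k : ℝ) := by simp
    have hint : ∀ x, ∃ m : ℤ, h x = (m : ℝ) := fun x => by
      have hc : ∀ i : Fin k, ∃ m : ℤ, g j i x = (m : ℝ) := fun i => by
        rcases val_cases (hval j i) x with h' | h' | h'
        · exact ⟨-1, by rw [h']; norm_num⟩
        · exact ⟨0, by rw [h']; norm_num⟩
        · exact ⟨1, by rw [h']; norm_num⟩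
      choose f hf using hc
      refine ⟨∑ i, f i, ?_⟩
      rw [hh]
      push_cast
      exact Finset.sum_congr rfl fun i _ => hf i
    -- pointwise q vs 2
    have hpt : ∀ x, |h x| ^ q ≤ |h x| ^ (2 : ℝ) := fun x => by
      rcases eq_or_ne (h x) 0 with h0 | h0
      · rw [h0, abs_zero, Real.zero_rpow hq0.ne', Real.zero_rpow two_ne_zero]
      · obtain ⟨m, hm⟩ := hint x
        have hm0 : m ≠ 0 := by
          intro hc; rw [hc] at hm; simp at hm; exact h0 hm
        have h1 : (1 : ℝ) ≤ |h x| := by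
          rw [hm, ← Int.cast_abs]
          exact_mod_cast Int.one_le_abs hm0
        exact Real.rpow_le_rpow_of_exponent_le h1 hq2
    have hint_q : Integrable (fun x => |h x| ^ q) mu01 := by
      refine integrable_of_bound _ ((k : ℝ) ^ q) ((Real.continuous_rpow_const hq0.le).measurable.comp hhm.abs) fun x => ?_
      rw [abs_of_nonneg (Real.rpow_nonneg (abs_nonneg _) q)]
      exact Real.rpow_le_rpow (abs_nonneg _) (hhb x) hq0.le
    have hint_2 : Integrable (fun x => |h x| ^ (2 : ℝ)) mu01 := by
      refine integrable_of_bound _ ((k : ℝ) ^ (2 : ℝ)) ((Real.continuous_rpow_const two_pos.le).measurable.comp hhm.abs) fun x => ?_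
      rw [abs_of_nonneg (Real.rpow_nonneg (abs_nonneg _) _)]
      exact Real.rpow_le_rpow (abs_nonneg _) (hhb x) two_pos.le
    have hBD : (∫ x, |h x| ^ q ∂mu01) ≤ ∫ x, |h x| ^ (2 : ℝ) ∂mu01 :=
      integral_mono hint_q hint_2 hpt
    -- identify the second moment
    have hI2 : (∫ x, |h x| ^ (2 : ℝ) ∂mu01) = ∑ i, μbar i := by
      have : (fun x => |h x| ^ (2 : ℝ)) = fun x => (h x) ^ (2 : ℕ) := by
        funext x
        rw [show (2 : ℝ) = ((2 : ℕ) : ℝ) by norm_num, Real.rpow_natCast, sq_abs]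
      rw [this]
      exact second_moment μbar G (hmeas j) (hval j) (hindep j) (hsymm j) (habs j)
    -- p-th moment bound
    have hIp : (∫ x, |h x| ^ p ∂mu01) ≤ Ck * ∑ i, μbar i := by
      have : (fun x => |h x| ^ p) = fun x => (h x) ^ (2 * k : ℕ) := by
        funext x
        rw [hp, show (2 * (k : ℝ)) = ((2 * k : ℕ) : ℝ) by push_cast; ring,
          Real.rpow_natCast]
        exact Even.pow_abs ⟨k, by ring⟩ _
      rw [this]
      exact moment_bound hk μbar (fun i => (hlt1 i).le) (fun i => (hpos i).le) G
        (hmeas j) (hval j) (hindep j) (hsymm j) (habs j)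
    rw [← hI2] at hIp
    -- nonnegativity
    have hA0 : 0 ≤ ∫ x, |h x| ^ p ∂mu01 :=
      integral_nonneg fun x => Real.rpow_nonneg (abs_nonneg _) _
    have hB0 : 0 ≤ ∫ x, |h x| ^ q ∂mu01 :=
      integral_nonneg fun x => Real.rpow_nonneg (abs_nonneg _) _
    have hD0 : 0 ≤ ∫ x, |h x| ^ (2 : ℝ) ∂mu01 :=
      integral_nonneg fun x => Real.rpow_nonneg (abs_nonneg _) _
    set A := ∫ x, |h x| ^ p ∂mu01
    set B := ∫ x, |h x| ^ q ∂mu01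
    set D := ∫ x, |h x| ^ (2 : ℝ) ∂mu01
    calc A ^ (1 / p) * B ^ (1 / q)
        ≤ (Ck * D) ^ (1 / p) * D ^ (1 / q) :=
          mul_le_mul (Real.rpow_le_rpow hA0 hIp hip.le)
            (Real.rpow_le_rpow hB0 hBD hiq0.le)
            (Real.rpow_nonneg hB0 _)
            (Real.rpow_nonneg (mul_nonneg hCk0 hD0) _)
      _ = Ck ^ (1 / p) * (D ^ (1 / p) * D ^ (1 / q)) := by
          rw [Real.mul_rpow hCk0 hD0]; ring
      _ = Ck ^ (1 / p) * D := by
          rw [← Real.rpow_add' hD0 (by rw [hpq]; exact one_ne_zero), hpq, Real.rpow_one]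
  exact ⟨key, ⟨Ck ^ (1 / p), key⟩⟩
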